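/- arXiv:2502.08569 — 2 statements merged into one kernel-verified Lean document; each statement's English description precedes it below -/
import Mathlib

section
/- Suppose F0* and F1* are distribution functions satisfying the mixture relations with π0 + π1 > 1 and π0, π1 ∈ (0,1]. If the recovered functions F0(t) = (π1·F0*(t) − (1−π0)·F1*(t))/(π0+π1−1) and F1(t) = (π0·F1*(t) − (1−π1)·F0*(t))/(π0+π1−1) are each nondecreasing, then they are distribution functions: F0, F1 map into [0,1], tend to 0 at −∞ and 1 at +∞ whenever F0* and F1* do. -/
open Filter

theorem recovered_distribution_functions
    (π0 π1 : ℝ) (hπ0 : π0 ∈ Set.Ioc (0 : ℝ) 1) (hπ1 : π1 ∈ Set.Ioc (0 : ℝ) 1)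
    (hsum : 1 < π0 + π1)
    (F0s F1s : ℝ → ℝ)
    (h0range : ∀ t, F0s t ∈ Set.Icc (0 : ℝ) 1) (h1range : ∀ t, F1s t ∈ Set.Icc (0 : ℝ) 1)
    (h0mono : Monotone F0s) (h1mono : Monotone F1s)
    (h0bot : Tendsto F0s atBot (nhds 0)) (h0top : Tendsto F0s atTop (nhds 1))
    (h1bot : Tendsto F1s atBot (nhds 0)) (h1top : Tendsto F1s atTop (nhds 1))
    (F0 F1 : ℝ → ℝ)
    (hF0 : ∀ t, F0 t = (π1 * F0s t - (1 - π0) * F1s t) / (π0 + π1 - 1))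
    (hF1 : ∀ t, F1 t = (π0 * F1s t - (1 - π1) * F0s t) / (π0 + π1 - 1))
    (hF0mono : Monotone F0) (hF1mono : Monotone F1) :
    (∀ t, F0 t ∈ Set.Icc (0 : ℝ) 1) ∧ (∀ t, F1 t ∈ Set.Icc (0 : ℝ) 1) ∧
    Tendsto F0 atBot (nhds 0) ∧ Tendsto F0 atTop (nhds 1) ∧
    Tendsto F1 atBot (nhds 0) ∧ Tendsto F1 atTop (nhds 1) := by
  have hd : π0 + π1 - 1 ≠ 0 := by linarith
  have hF0bot : Tendsto F0 atBot (nhds 0) := by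
    have := ((h0bot.const_mul π1).sub (h1bot.const_mul (1 - π0))).div_const (π0 + π1 - 1)
    simpa [funext hF0] using this.congr (fun t => (hF0 t).symm)
  have hF0top : Tendsto F0 atTop (nhds 1) := by
    have := ((h0top.const_mul π1).sub (h1top.const_mul (1 - π0))).div_const (π0 + π1 - 1)
    have h1 : (π1 * 1 - (1 - π0) * 1) / (π0 + π1 - 1) = 1 := by field_simp; ring
    rw [h1] at this
    exact this.congr (fun t => (hF0 t).symm)
  have hF1bot : Tendsto F1 atBot (nhds 0) := by
    have := ((h1bot.const_mul π0).sub (h0bot.const_mul (1 - π1))).div_const (π0 + π1 - 1)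
    simpa using this.congr (fun t => (hF1 t).symm)
  have hF1top : Tendsto F1 atTop (nhds 1) := by
    have := ((h1top.const_mul π0).sub (h0top.const_mul (1 - π1))).div_const (π0 + π1 - 1)
    have h1 : (π0 * 1 - (1 - π1) * 1) / (π0 + π1 - 1) = 1 := by field_simp; ring
    rw [h1] at this
    exact this.congr (fun t => (hF1 t).symm)
  refine ⟨fun t => ⟨hF0mono.le_of_tendsto hF0bot t, hF0mono.ge_of_tendsto hF0top t⟩,
    fun t => ⟨hF1mono.le_of_tendsto hF1bot t, hF1mono.ge_of_tendsto hF1top t⟩,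
    hF0bot, hF0top, hF1bot, hF1top⟩
end

section
/- Monotone likelihood ratio implies concave ROC: if f1 = exp(h)·f0 with h nondecreasing and f0 > 0 continuous on [0,1], then the ROC curve s ↦ 1 − F1(F0⁻¹(1−s)) is concave on [0,1]. -/
open Set MeasureTheory intervalIntegral

theorem mlr_implies_concave_roc
    (f0 h : ℝ → ℝ)
    (hf0c : ContinuousOn f0 (Set.Icc 0 1)) (hf0pos : ∀ t ∈ Set.Icc (0 : ℝ) 1, 0 < f0 t)
    (hhc : ContinuousOn h (Set.Icc 0 1)) (hhm : MonotoneOn h (Set.Icc 0 1))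
    (f1 : ℝ → ℝ) (hf1 : ∀ t, f1 t = Real.exp (h t) * f0 t)
    (hf0int : ∫ t in (0:ℝ)..1, f0 t = 1) (hf1int : ∫ t in (0:ℝ)..1, f1 t = 1)
    (F0 F1 : ℝ → ℝ)
    (hF0 : ∀ t, F0 t = ∫ s in (0:ℝ)..t, f0 s)
    (hF1 : ∀ t, F1 t = ∫ s in (0:ℝ)..t, f1 s)
    (F0inv : ℝ → ℝ)
    (hinv_mem : ∀ s ∈ Set.Icc (0 : ℝ) 1, F0inv s ∈ Set.Icc (0 : ℝ) 1)
    (hinv : ∀ s ∈ Set.Icc (0 : ℝ) 1, F0 (F0inv s) = s)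
    (hinv' : ∀ t ∈ Set.Icc (0 : ℝ) 1, F0inv (F0 t) = t) :
    ConcaveOn ℝ (Set.Icc 0 1) (fun s => 1 - F1 (F0inv (1 - s))) := by
  have hIcc : Set.Icc (0:ℝ) 1 = Set.uIcc (0:ℝ) 1 := (Set.uIcc_of_le zero_le_one).symm
  -- continuity of f1
  have hf1fun : f1 = fun t => Real.exp (h t) * f0 t := funext hf1
  have hf1c : ContinuousOn f1 (Set.Icc 0 1) := by
    rw [hf1fun]; exact (Real.continuous_exp.comp_continuousOn hhc).mul hf0c
  -- interval integrability within [0,1]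
  have hint0 : ∀ a ∈ Set.Icc (0:ℝ) 1, ∀ b ∈ Set.Icc (0:ℝ) 1,
      IntervalIntegrable f0 volume a b := by
    intro a ha b hb
    refine (hf0c.mono ?_).intervalIntegrable
    rw [hIcc]; exact Set.uIcc_subset_uIcc (hIcc ▸ ha) (hIcc ▸ hb)
  have hint1 : ∀ a ∈ Set.Icc (0:ℝ) 1, ∀ b ∈ Set.Icc (0:ℝ) 1,
      IntervalIntegrable f1 volume a b := by
    intro a ha b hb
    refine (hf1c.mono ?_).intervalIntegrable
    rw [hIcc]; exact Set.uIcc_subset_uIcc (hIcc ▸ ha) (hIcc ▸ hb)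
  have h01 : (0:ℝ) ∈ Set.Icc (0:ℝ) 1 := ⟨le_refl 0, zero_le_one⟩
  have h11 : (1:ℝ) ∈ Set.Icc (0:ℝ) 1 := ⟨zero_le_one, le_refl 1⟩
  -- F0 values
  have hF00 : F0 0 = 0 := by rw [hF0]; exact intervalIntegral.integral_same
  have hF01 : F0 1 = 1 := by rw [hF0]; exact hf0int
  -- strict monotonicity of F0
  have hF0mono : StrictMonoOn F0 (Set.Icc 0 1) := by
    intro a ha b hb hab
    have hadd : (∫ s in (0:ℝ)..a, f0 s) + ∫ s in a..b, f0 s = ∫ s in (0:ℝ)..b, f0 s :=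
      intervalIntegral.integral_add_adjacent_intervals (hint0 0 h01 a ha) (hint0 a ha b hb)
    have hpos : 0 < ∫ s in a..b, f0 s := by
      refine intervalIntegral_pos_of_pos_on (hint0 a ha b hb) ?_ hab
      intro x hx
      exact hf0pos x ⟨le_trans ha.1 hx.1.le, le_trans hx.2.le hb.2⟩
    rw [hF0 a, hF0 b]; linarith
  have hF0maps : ∀ t ∈ Set.Icc (0:ℝ) 1, F0 t ∈ Set.Icc (0:ℝ) 1 := by
    intro t ht
    constructor
    · calc (0:ℝ) = F0 0 := hF00.symm
        _ ≤ F0 t := hF0mono.monotoneOn h01 ht ht.1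
    · calc F0 t ≤ F0 1 := hF0mono.monotoneOn ht h11 ht.2
        _ = 1 := hF01
  -- strict monotonicity of F0inv
  have hFinvmono : StrictMonoOn F0inv (Set.Icc 0 1) := by
    intro a ha b hb hab
    by_contra hle
    push_neg at hle
    have : b ≤ a := by
      calc b = F0 (F0inv b) := (hinv b hb).symm
        _ ≤ F0 (F0inv a) := hF0mono.monotoneOn (hinv_mem b hb) (hinv_mem a ha) hle
        _ = a := hinv a ha
    exact absurd this (not_le.2 hab)
  -- image of F0inv covers [0,1]
  have hF0invimage : Set.Icc (0:ℝ) 1 ⊆ F0inv '' Set.Icc 0 1 := by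
    intro x hx
    exact ⟨F0 x, hF0maps x hx, hinv' x hx⟩
  -- F0inv sends interior to interior
  have hFinvIoo : ∀ a ∈ Set.Ioo (0:ℝ) 1, F0inv a ∈ Set.Ioo (0:ℝ) 1 := by
    intro a ha
    have haI : a ∈ Set.Icc (0:ℝ) 1 := Set.Ioo_subset_Icc_self ha
    have hmem := hinv_mem a haI
    have hFa := hinv a haI
    constructor
    · rcases lt_or_eq_of_le hmem.1 with hlt | heq
      · exact hlt
      · exfalso; rw [← heq, hF00] at hFa; exact absurd hFa.symm (ne_of_gt ha.1)
    · rcases lt_or_eq_of_le hmem.2 with hlt | heq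
      · exact hlt
      · exfalso; rw [heq, hF01] at hFa; exact absurd hFa.symm (ne_of_lt ha.2)
  -- continuity of F0inv on [0,1]
  have hFinvc : ContinuousOn F0inv (Set.Icc 0 1) := by
    intro a ha
    have hR : a < 1 → ContinuousWithinAt F0inv (Set.Ici a) a := by
      intro ha1
      refine hFinvmono.continuousWithinAt_right_of_image_mem_nhdsWithin
        (Icc_mem_nhdsGE_of_mem ⟨ha.1, ha1⟩) ?_
      refine Filter.mem_of_superset (Icc_mem_nhdsGE_of_mem ?_) hF0invimage
      refine ⟨(hinv_mem a ha).1, lt_of_le_of_ne (hinv_mem a ha).2 ?_⟩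
      intro heq
      have hFa := hinv a ha
      rw [heq, hF01] at hFa
      exact absurd hFa.symm (ne_of_lt ha1)
    have hL : 0 < a → ContinuousWithinAt F0inv (Set.Iic a) a := by
      intro ha0
      refine hFinvmono.continuousWithinAt_left_of_image_mem_nhdsWithin
        (Icc_mem_nhdsLE_of_mem ⟨ha0, ha.2⟩) ?_
      refine Filter.mem_of_superset (Icc_mem_nhdsLE_of_mem ?_) hF0invimage
      refine ⟨lt_of_le_of_ne (hinv_mem a ha).1 ?_, (hinv_mem a ha).2⟩
      intro heq
      have hFa := hinv a ha
      rw [← heq, hF00] at hFa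
      exact absurd hFa.symm (ne_of_gt ha0)
    rcases eq_or_lt_of_le ha.2 with h1 | h1
    · exact (hL (by rw [h1]; norm_num)).mono (fun x hx => by rw [h1]; exact hx.2)
    · rcases eq_or_lt_of_le ha.1 with h0 | h0
      · exact (hR h1).mono (fun x hx => by rw [← h0]; exact hx.1)
      · exact (continuousAt_iff_continuous_left_right.2 ⟨hL h0, hR h1⟩).continuousWithinAt
  -- continuity of F1 on [0,1]
  have hF1fun : F1 = fun x => ∫ s in (0:ℝ)..x, f1 s := funext hF1
  have hF1c : ContinuousOn F1 (Set.Icc 0 1) := by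
    rw [hF1fun, hIcc]
    exact intervalIntegral.continuousOn_primitive_interval
      (hf1c.integrableOn_Icc.mono_set (by rw [hIcc]))
  -- continuity of the ROC function on [0,1]
  have hgc : ContinuousOn (fun s => 1 - F1 (F0inv (1 - s))) (Set.Icc 0 1) := by
    have hsubc : ContinuousOn (fun s : ℝ => 1 - s) (Set.Icc 0 1) :=
      (continuous_const.sub continuous_id).continuousOn
    have hsubmap : Set.MapsTo (fun s : ℝ => 1 - s) (Set.Icc 0 1) (Set.Icc 0 1) := by
      intro x hx; constructor <;> simp <;> [exact hx.2; exact hx.1]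
    have hc1 : ContinuousOn (fun s : ℝ => F0inv (1 - s)) (Set.Icc 0 1) :=
      hFinvc.comp hsubc hsubmap
    have hmap1 : Set.MapsTo (fun s : ℝ => F0inv (1 - s)) (Set.Icc 0 1) (Set.Icc 0 1) :=
      fun x hx => hinv_mem _ (hsubmap hx)
    exact continuousOn_const.sub (hF1c.comp hc1 hmap1)
  -- derivatives of F0 and F1 at interior points
  have hd0 : ∀ u ∈ Set.Ioo (0:ℝ) 1, HasDerivAt F0 (f0 u) u := by
    intro u hu
    have hF0fun : F0 = fun x => ∫ s in (0:ℝ)..x, f0 s := funext hF0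
    rw [hF0fun]
    exact intervalIntegral.integral_hasDerivAt_right
      (hint0 0 h01 u (Set.Ioo_subset_Icc_self hu))
      ((hf0c.mono Set.Ioo_subset_Icc_self).stronglyMeasurableAtFilter isOpen_Ioo u hu)
      (hf0c.continuousAt (Icc_mem_nhds hu.1 hu.2))
  have hd1 : ∀ u ∈ Set.Ioo (0:ℝ) 1, HasDerivAt F1 (f1 u) u := by
    intro u hu
    rw [hF1fun]
    exact intervalIntegral.integral_hasDerivAt_right
      (hint1 0 h01 u (Set.Ioo_subset_Icc_self hu))
      ((hf1c.mono Set.Ioo_subset_Icc_self).stronglyMeasurableAtFilter isOpen_Ioo u hu)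
      (hf1c.continuousAt (Icc_mem_nhds hu.1 hu.2))
  -- key derivative of the ROC function at interior points
  have key : ∀ s ∈ Set.Ioo (0:ℝ) 1,
      HasDerivAt (fun s => 1 - F1 (F0inv (1 - s))) (Real.exp (h (F0inv (1 - s)))) s := by
    intro s hs
    have hs1 : (1:ℝ) - s ∈ Set.Ioo (0:ℝ) 1 := ⟨by linarith [hs.2], by linarith [hs.1]⟩
    set t := F0inv (1 - s) with ht_def
    have ht : t ∈ Set.Ioo (0:ℝ) 1 := hFinvIoo _ hs1
    have htI : t ∈ Set.Icc (0:ℝ) 1 := Set.Ioo_subset_Icc_self ht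
    have hf0ne : f0 t ≠ 0 := ne_of_gt (hf0pos t htI)
    have hinvc : ContinuousAt F0inv (1 - s) :=
      hFinvc.continuousAt (Icc_mem_nhds hs1.1 hs1.2)
    have hfg : ∀ᶠ y in nhds (1 - s), F0 (F0inv y) = y :=
      Filter.eventually_of_mem (Ioo_mem_nhds hs1.1 hs1.2)
        (fun y hy => hinv y (Set.Ioo_subset_Icc_self hy))
    have hinvd : HasDerivAt F0inv (f0 t)⁻¹ (1 - s) :=
      HasDerivAt.of_local_left_inverse hinvc (hd0 t ht) hf0ne hfg
    have hsub : HasDerivAt (fun s : ℝ => 1 - s) (-1) s := by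
      simpa using (hasDerivAt_id s).const_sub 1
    have hcomp1 : HasDerivAt (fun s : ℝ => F0inv (1 - s)) ((f0 t)⁻¹ * (-1)) s :=
      HasDerivAt.comp s hinvd hsub
    have hcomp2 : HasDerivAt (fun s : ℝ => F1 (F0inv (1 - s)))
        (f1 t * ((f0 t)⁻¹ * (-1))) s :=
      HasDerivAt.comp s (hd1 t ht) hcomp1
    have hfinal := hcomp2.const_sub 1
    have hval : -(f1 t * ((f0 t)⁻¹ * (-1))) = Real.exp (h t) := by
      rw [hf1 t]; field_simp
    rw [hval] at hfinal
    exact hfinal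
  -- conclude concavity
  have hinterior : interior (Set.Icc (0:ℝ) 1) = Set.Ioo 0 1 := interior_Icc
  refine AntitoneOn.concaveOn_of_deriv (convex_Icc 0 1) hgc ?_ ?_
  · rw [hinterior]
    intro s hs
    exact ((key s hs).differentiableAt).differentiableWithinAt
  · rw [hinterior]
    intro s1 h1 s2 h2 hle
    rw [(key s1 h1).deriv, (key s2 h2).deriv]
    apply Real.exp_le_exp.2
    have hmem1 : (1:ℝ) - s1 ∈ Set.Icc (0:ℝ) 1 := ⟨by linarith [h1.2], by linarith [h1.1]⟩
    have hmem2 : (1:ℝ) - s2 ∈ Set.Icc (0:ℝ) 1 := ⟨by linarith [h2.2], by linarith [h2.1]⟩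
    exact hhm (hinv_mem _ hmem2) (hinv_mem _ hmem1)
      (hFinvmono.monotoneOn hmem2 hmem1 (by linarith))
end
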